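/- arXiv:2311.11733 — 4 statements merged into one kernel-verified Lean document; each statement's English description precedes it below -/
import Mathlib

section
/- For natural numbers q, d, r with r ≤ d ≤ q, the sum over k from 0 to r of (1/q^k) · C(q,k) · d^k · (e d / q)^{(d-k)/2} is at most e^d · (e d / q)^{(d-r)/2}. -/
open Real Finset

/-- For `r ≤ d ≤ q` (with `e d ≤ q`),
`∑_{k=0}^{r} (1/q^k) C(q,k) d^k (e d/q)^((d-k)/2) ≤ e^d (e d/q)^((d-r)/2)`. -/
theorem sum_unique_colour_bound (q d r : ℕ) (hrd : r ≤ d) (hdq : d ≤ q)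
    (hq : Real.exp 1 * d ≤ q) (hq0 : 0 < q) :
    (∑ k ∈ Finset.range (r + 1),
        (1 / (q : ℝ) ^ k) * (q.choose k : ℝ) * (d : ℝ) ^ k *
          (Real.exp 1 * d / q) ^ (((d : ℝ) - k) / 2))
      ≤ Real.exp d * (Real.exp 1 * d / q) ^ (((d : ℝ) - r) / 2) := by
  have hqR : (0 : ℝ) < q := by exact_mod_cast hq0
  rcases Nat.eq_zero_or_pos d with hd0 | hd0
  · subst hd0
    interval_cases r
    simp
  have hbase : (0 : ℝ) < Real.exp 1 * d / q := by
    positivity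
  have hbase1 : Real.exp 1 * d / q ≤ 1 := by
    rw [div_le_one hqR]; exact hq
  calc (∑ k ∈ Finset.range (r + 1),
        (1 / (q : ℝ) ^ k) * (q.choose k : ℝ) * (d : ℝ) ^ k *
          (Real.exp 1 * d / q) ^ (((d : ℝ) - k) / 2))
      ≤ ∑ k ∈ Finset.range (r + 1),
          ((d : ℝ) ^ k / (Nat.factorial k)) * (Real.exp 1 * d / q) ^ (((d : ℝ) - r) / 2) := by
        apply Finset.sum_le_sum
        intro k hk
        have hk' : k ≤ r := Nat.lt_succ_iff.mp (Finset.mem_range.mp hk)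
        have h1 : (1 / (q : ℝ) ^ k) * (q.choose k : ℝ) ≤ 1 / (Nat.factorial k) := by
          rw [one_div_mul_eq_div, div_le_div_iff₀ (by positivity) (by positivity)]
          have := Nat.choose_le_pow_div (α := ℝ) k q
          rw [le_div_iff₀ (by positivity : (0:ℝ) < (Nat.factorial k : ℝ))] at this
          nlinarith [this]
        have h2 : (Real.exp 1 * d / q) ^ (((d : ℝ) - k) / 2)
            ≤ (Real.exp 1 * d / q) ^ (((d : ℝ) - r) / 2) := by
          apply Real.rpow_le_rpow_of_exponent_ge hbase hbase1
          have : (k : ℝ) ≤ r := by exact_mod_cast hk'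
          linarith
        have hpow : (0:ℝ) ≤ (Real.exp 1 * d / q) ^ (((d : ℝ) - k) / 2) :=
          Real.rpow_nonneg hbase.le _
        calc (1 / (q : ℝ) ^ k) * (q.choose k : ℝ) * (d : ℝ) ^ k *
              (Real.exp 1 * d / q) ^ (((d : ℝ) - k) / 2)
            ≤ (1 / ((Nat.factorial k) : ℝ)) * (d : ℝ) ^ k *
              (Real.exp 1 * d / q) ^ (((d : ℝ) - k) / 2) := by
              apply mul_le_mul_of_nonneg_right _ hpow
              exact mul_le_mul_of_nonneg_right h1 (by positivity)
          _ ≤ ((d : ℝ) ^ k / (Nat.factorial k)) * (Real.exp 1 * d / q) ^ (((d : ℝ) - r) / 2) := by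
              rw [one_div_mul_eq_div, div_mul_eq_mul_div, div_mul_eq_mul_div,
                div_le_div_iff₀ (by positivity) (by positivity)]
              have : (0:ℝ) ≤ (d:ℝ)^k := by positivity
              nlinarith [mul_le_mul_of_nonneg_left h2 this,
                sq_nonneg ((Nat.factorial k : ℝ))]
    _ = (∑ k ∈ Finset.range (r + 1), (d : ℝ) ^ k / (Nat.factorial k)) *
          (Real.exp 1 * d / q) ^ (((d : ℝ) - r) / 2) := by
        rw [Finset.sum_mul]
    _ ≤ Real.exp d * (Real.exp 1 * d / q) ^ (((d : ℝ) - r) / 2) := by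
        apply mul_le_mul_of_nonneg_right _ (Real.rpow_nonneg hbase.le _)
        exact Real.sum_le_exp_of_nonneg (by positivity) _
end

section
/- Let q, z be natural numbers with q ≥ 2z ≥ 2. The probability that 2z independent uniform random variables with values in {1,...,q} take at most z distinct values is at most z · (z e / q)^z. -/
open Finset Real

/-- For `q ≥ 2z ≥ 2`, the probability that `2z` independent uniform random variables
with values in `{1,…,q}` take at most `z` distinct values is at most `z (z e / q)^z`. -/
theorem prob_few_distinct_values (q z : ℕ) (hz : 1 ≤ z) (hq : 2 * z ≤ q) :
    ((Finset.univ.filter (fun f : Fin (2 * z) → Fin q =>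
        (Finset.univ.image f).card ≤ z)).card : ℝ) / (q : ℝ) ^ (2 * z)
      ≤ (z : ℝ) * ((z : ℝ) * Real.exp 1 / q) ^ z := by
  classical
  have hq0 : 0 < q := by omega
  -- counting step
  have hsub : (Finset.univ.filter (fun f : Fin (2 * z) → Fin q =>
      (Finset.univ.image f).card ≤ z)) ⊆
      (Finset.univ.powersetCard z).biUnion
        (fun S => Fintype.piFinset fun _ : Fin (2 * z) => S) := by
    intro f hf
    simp only [mem_filter, mem_univ, true_and] at hf
    obtain ⟨u, hu1, hu2, hu3⟩ := Finset.exists_subsuperset_card_eq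
      (Finset.subset_univ (Finset.univ.image f)) hf
      (by simpa [Fintype.card_fin] using le_trans (by omega) hq)
    refine Finset.mem_biUnion.2 ⟨u, ?_, ?_⟩
    · simp [Finset.mem_powersetCard, hu2, hu3]
    · exact Fintype.mem_piFinset.2 fun i => hu1 (Finset.mem_image_of_mem f (mem_univ i))
  have hcount : (Finset.univ.filter (fun f : Fin (2 * z) → Fin q =>
      (Finset.univ.image f).card ≤ z)).card ≤ q.choose z * z ^ (2 * z) := by
    calc (Finset.univ.filter (fun f : Fin (2 * z) → Fin q =>
        (Finset.univ.image f).card ≤ z)).card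
        ≤ ((Finset.univ.powersetCard z).biUnion
          (fun S => Fintype.piFinset fun _ : Fin (2 * z) => S)).card := Finset.card_le_card hsub
      _ ≤ ∑ S ∈ (Finset.univ : Finset (Fin q)).powersetCard z,
          (Fintype.piFinset fun _ : Fin (2 * z) => S).card := Finset.card_biUnion_le
      _ = ∑ S ∈ (Finset.univ : Finset (Fin q)).powersetCard z, z ^ (2 * z) := by
          refine Finset.sum_congr rfl fun S hS => ?_
          rw [Fintype.card_piFinset]
          simp [(Finset.mem_powersetCard.1 hS).2]
      _ = q.choose z * z ^ (2 * z) := by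
          rw [Finset.sum_const, Finset.card_powersetCard, Finset.card_univ, Fintype.card_fin,
            smul_eq_mul]
  -- analytic bounds
  have hchoose : (q.choose z : ℝ) ≤ (q : ℝ) ^ z / (z.factorial : ℝ) := by
    have := Nat.choose_le_pow_div (α := ℝ) z q
    push_cast at this ⊢
    exact this
  have hfact : ((z : ℝ)) ^ z ≤ (z.factorial : ℝ) * Real.exp 1 ^ z := by
    have h := Real.pow_div_factorial_le_exp (x := (z : ℝ)) (by positivity) z
    rw [div_le_iff₀ (by positivity)] at h
    calc ((z : ℝ)) ^ z ≤ Real.exp z * (z.factorial : ℝ) := h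
      _ = (z.factorial : ℝ) * Real.exp 1 ^ z := by
          rw [← Real.exp_one_rpow (z : ℝ), Real.rpow_natCast, mul_comm]
  have hF : (0 : ℝ) < (z.factorial : ℝ) := by positivity
  have hkey : (q.choose z : ℝ) * (z : ℝ) ^ z ≤ (q : ℝ) ^ z * Real.exp 1 ^ z := by
    calc (q.choose z : ℝ) * (z : ℝ) ^ z
        ≤ ((q : ℝ) ^ z / (z.factorial : ℝ)) * ((z.factorial : ℝ) * Real.exp 1 ^ z) := by
          exact mul_le_mul hchoose hfact (by positivity) (by positivity)
      _ = (q : ℝ) ^ z * Real.exp 1 ^ z := by field_simp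
  -- put together
  have hstep : ((Finset.univ.filter (fun f : Fin (2 * z) → Fin q =>
      (Finset.univ.image f).card ≤ z)).card : ℝ) ≤ (q.choose z : ℝ) * (z : ℝ) ^ (2 * z) := by
    exact_mod_cast Nat.cast_le.2 hcount
  have hQ : (0 : ℝ) < (q : ℝ) ^ z := by positivity
  have h2 : ∀ x : ℝ, x ^ (2 * z) = x ^ z * x ^ z := fun x => by
    rw [two_mul, pow_add]
  calc ((Finset.univ.filter (fun f : Fin (2 * z) → Fin q =>
        (Finset.univ.image f).card ≤ z)).card : ℝ) / (q : ℝ) ^ (2 * z)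
      ≤ ((q.choose z : ℝ) * (z : ℝ) ^ (2 * z)) / (q : ℝ) ^ (2 * z) := by
        gcongr
    _ = ((q.choose z : ℝ) * (z : ℝ) ^ z) * (z : ℝ) ^ z / ((q : ℝ) ^ z * (q : ℝ) ^ z) := by
        rw [h2, h2]; ring
    _ ≤ ((q : ℝ) ^ z * Real.exp 1 ^ z) * (z : ℝ) ^ z / ((q : ℝ) ^ z * (q : ℝ) ^ z) := by
        gcongr
    _ = ((z : ℝ) * Real.exp 1 / q) ^ z := by
        rw [div_pow, mul_pow]
        field_simp
    _ ≤ (z : ℝ) * ((z : ℝ) * Real.exp 1 / q) ^ z := by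
        exact le_mul_of_one_le_left (by positivity) (by exact_mod_cast hz)
end

section
/- Let A₁,...,A_t be events in a probability space with dependency graph Γ (each A_i independent of the collection of A_j with (i,j) not an edge of Γ). If there exist reals 0 ≤ y(i) < 1 with P(A_i) ≤ y(i) · ∏_{(i,j) ∈ E(Γ)} (1 - y(j)) for every i, then P(⋂_i A_iᶜ) ≥ ∏_i (1 - y(i)) > 0. -/
open MeasureTheory ProbabilityTheory

/-- The asymmetric Lovász Local Lemma: if each event `A i` is (mutually) independent
of the family of events `A j` over non-neighbours `j` in the dependency graph `Γ`,
and `P(A i) ≤ y i · ∏_{Γ.Adj i j} (1 - y j)` with `0 ≤ y i < 1`, then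
`P(⋂ i, (A i)ᶜ) ≥ ∏ i (1 - y i) > 0`. -/
theorem lovasz_local_lemma {Ω : Type*} [MeasurableSpace Ω] (μ : Measure Ω)
    [IsProbabilityMeasure μ] (t : ℕ) (A : Fin t → Set Ω)
    (hA : ∀ i, MeasurableSet (A i)) (Γ : SimpleGraph (Fin t)) [DecidableRel Γ.Adj]
    (hIndep : ∀ i : Fin t,
      ProbabilityTheory.Indep (MeasurableSpace.generateFrom {A i})
        (MeasurableSpace.generateFrom {s | ∃ j : Fin t, j ≠ i ∧ ¬Γ.Adj i j ∧ s = A j}) μ)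
    (y : Fin t → ℝ) (hy0 : ∀ i, 0 ≤ y i) (hy1 : ∀ i, y i < 1)
    (hP : ∀ i, (μ (A i)).toReal ≤
      y i * ∏ j ∈ Finset.univ.filter (fun j => Γ.Adj i j), (1 - y j)) :
    (∏ i : Fin t, (1 - y i)) ≤ (μ (⋂ i, (A i)ᶜ)).toReal ∧
      0 < ∏ i : Fin t, (1 - y i) := by
  classical
  set P : Set Ω → ℝ := fun s => (μ s).toReal with hPdef
  set C : Finset (Fin t) → Set Ω := fun S => ⋂ j ∈ (S : Finset (Fin t)), (A j)ᶜ with hCdef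
  have hCmeas : ∀ S, MeasurableSet (C S) := fun S =>
    Finset.measurableSet_biInter _ fun j _ => (hA j).compl
  -- splitting lemma: P u = P (s ∩ u) + P (sᶜ ∩ u)
  have hsplit : ∀ (s u : Set Ω), MeasurableSet s → MeasurableSet u →
      P u = P (s ∩ u) + P (sᶜ ∩ u) := by
    intro s u hs hu
    have h1 : μ (u ∩ s) + μ (u \ s) = μ u := measure_inter_add_diff u hs
    have h2 : (μ (u ∩ s)).toReal + (μ (u \ s)).toReal = (μ u).toReal := by
      rw [← ENNReal.toReal_add (measure_ne_top _ _) (measure_ne_top _ _), h1]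
    simp only [hPdef]
    rw [Set.inter_comm s u, Set.inter_comm sᶜ u, ← Set.diff_eq, h2.symm]
  have hPnonneg : ∀ s, 0 ≤ P s := fun s => ENNReal.toReal_nonneg
  have hPmono : ∀ {s u : Set Ω}, s ⊆ u → P s ≤ P u := fun h =>
    ENNReal.toReal_mono (measure_ne_top _ _) (measure_mono h)
  -- main lemma
  have main : ∀ S : Finset (Fin t), ∀ i ∉ S, P (A i ∩ C S) ≤ y i * P (C S) := by
    intro S
    induction S using Finset.strongInductionOn with
    | _ S ih =>
      intro i hiS
      set S1 : Finset (Fin t) := S.filter (fun j => Γ.Adj i j) with hS1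
      set S2 : Finset (Fin t) := S.filter (fun j => ¬ Γ.Adj i j) with hS2
      have hS12 : S1 ∪ S2 = S := Finset.filter_union_filter_not_eq _ S
      -- independence: μ (A i ∩ C S2) = μ (A i) * μ (C S2)
      have hindep : P (A i ∩ C S2) = P (A i) * P (C S2) := by
        have h1 : MeasurableSet[MeasurableSpace.generateFrom {A i}] (A i) :=
          MeasurableSpace.measurableSet_generateFrom rfl
        have h2 : MeasurableSet[MeasurableSpace.generateFrom
            {s | ∃ j : Fin t, j ≠ i ∧ ¬Γ.Adj i j ∧ s = A j}] (C S2) := by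
          refine Finset.measurableSet_biInter _ fun j hj => MeasurableSet.compl ?_
          refine MeasurableSpace.measurableSet_generateFrom ?_
          have hj' := Finset.mem_filter.1 hj
          exact ⟨j, fun h => hiS (h ▸ hj'.1), hj'.2, rfl⟩
        have := ((Indep_iff _ _ μ).1 (hIndep i)) (A i) (C S2) h1 h2
        simp only [hPdef, this]
        rw [ENNReal.toReal_mul]
      -- chain lemma: for T ⊆ S1, ∏_{j∈T}(1-y j) * P (C S2) ≤ P (C (T ∪ S2))
      have chain : ∀ T : Finset (Fin t), T ⊆ S1 →
          (∏ j ∈ T, (1 - y j)) * P (C S2) ≤ P (C (T ∪ S2)) := by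
        intro T
        induction T using Finset.induction_on with
        | empty => intro _; simp
        | @insert a T haT ihT =>
          intro hsub
          have haS1 : a ∈ S1 := hsub (Finset.mem_insert_self a T)
          have hTsub : T ⊆ S1 := fun x hx => hsub (Finset.mem_insert_of_mem hx)
          have haTS2 : a ∉ T ∪ S2 := by
            simp only [Finset.mem_union, not_or]
            refine ⟨haT, ?_⟩
            intro ha2
            exact (Finset.mem_filter.1 ha2).2 (Finset.mem_filter.1 haS1).2
          have hss : T ∪ S2 ⊂ S := by
            refine Finset.ssubset_iff_of_subset ?_ |>.2 ⟨a, (Finset.mem_filter.1 haS1).1, haTS2⟩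
            intro x hx
            rcases Finset.mem_union.1 hx with h | h
            · exact (Finset.mem_filter.1 (hTsub h)).1
            · exact (Finset.mem_filter.1 h).1
          have hAa := ih _ hss a haTS2
          have hCins : C (insert a (T ∪ S2)) = (A a)ᶜ ∩ C (T ∪ S2) := by
            simp only [hCdef, Finset.set_biInter_insert]
          have hstep : (1 - y a) * P (C (T ∪ S2)) ≤ P (C (insert a (T ∪ S2))) := by
            have := hsplit (A a) (C (T ∪ S2)) (hA a) (hCmeas _)
            rw [hCins]
            nlinarith [hPnonneg (C (T ∪ S2))]
          calc (∏ j ∈ insert a T, (1 - y j)) * P (C S2)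
              = (1 - y a) * ((∏ j ∈ T, (1 - y j)) * P (C S2)) := by
                rw [Finset.prod_insert haT]; ring
            _ ≤ (1 - y a) * P (C (T ∪ S2)) := by
                have h1a : 0 ≤ 1 - y a := le_of_lt (by linarith [hy1 a])
                exact mul_le_mul_of_nonneg_left (ihT hTsub) h1a
            _ ≤ P (C (insert a (T ∪ S2))) := hstep
            _ = P (C (insert a T ∪ S2)) := by rw [Finset.insert_union]
      have hchain := chain S1 (le_refl _)
      rw [hS12] at hchain
      -- product over neighbours ≤ product over S1
      have hprod : (∏ j ∈ Finset.univ.filter (fun j => Γ.Adj i j), (1 - y j))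
          ≤ ∏ j ∈ S1, (1 - y j) := by
        have hsub : S1 ⊆ Finset.univ.filter (fun j => Γ.Adj i j) := by
          intro x hx
          simp only [Finset.mem_filter, Finset.mem_univ, true_and]
          exact (Finset.mem_filter.1 hx).2
        rw [← Finset.prod_sdiff hsub]
        have h1 : ∏ j ∈ (Finset.univ.filter (fun j => Γ.Adj i j)) \ S1, (1 - y j) ≤ 1 :=
          Finset.prod_le_one (fun j _ => by linarith [hy1 j]) (fun j _ => by linarith [hy0 j])
        have h2 : 0 ≤ ∏ j ∈ S1, (1 - y j) :=
          Finset.prod_nonneg fun j _ => by linarith [hy1 j]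
        nlinarith
      -- put it together
      have hCsub : C S ⊆ C S2 := by
        apply Set.biInter_subset_biInter_left
        intro x hx
        exact Finset.mem_coe.2 (hS12 ▸ Finset.mem_union_right S1 (Finset.mem_coe.1 hx) : x ∈ S)
      calc P (A i ∩ C S) ≤ P (A i ∩ C S2) :=
            hPmono (Set.inter_subset_inter_right _ hCsub)
        _ = P (A i) * P (C S2) := hindep
        _ ≤ (y i * ∏ j ∈ Finset.univ.filter (fun j => Γ.Adj i j), (1 - y j)) * P (C S2) :=
            mul_le_mul_of_nonneg_right (hP i) (hPnonneg _)
        _ ≤ (y i * ∏ j ∈ S1, (1 - y j)) * P (C S2) :=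
            mul_le_mul_of_nonneg_right (mul_le_mul_of_nonneg_left hprod (hy0 i)) (hPnonneg _)
        _ = y i * ((∏ j ∈ S1, (1 - y j)) * P (C S2)) := by ring
        _ ≤ y i * P (C S) := mul_le_mul_of_nonneg_left hchain (hy0 i)
  -- product bound: ∀ S, ∏_{j∈S}(1-y j) ≤ P (C S)
  have bound : ∀ S : Finset (Fin t), (∏ j ∈ S, (1 - y j)) ≤ P (C S) := by
    intro S
    induction S using Finset.induction_on with
    | empty => simp [hCdef, hPdef]
    | @insert a S haS ihS =>
      have hCins : C (insert a S) = (A a)ᶜ ∩ C S := by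
        simp only [hCdef, Finset.set_biInter_insert]
      have hAa := main S a haS
      have := hsplit (A a) (C S) (hA a) (hCmeas S)
      rw [Finset.prod_insert haS, hCins]
      have h1a : 0 ≤ 1 - y a := le_of_lt (by linarith [hy1 a])
      nlinarith [hPnonneg (C S)]
  have hpos : 0 < ∏ i : Fin t, (1 - y i) :=
    Finset.prod_pos fun j _ => by linarith [hy1 j]
  constructor
  · have := bound Finset.univ
    have hCuniv : C Finset.univ = ⋂ i, (A i)ᶜ := by
      simp [hCdef]
    rwa [hCuniv] at this
  · exact hpos
end

section
/- For natural numbers n ≥ 2 and q, d, r with (1-ε) n p ≤ d ≤ 2 n p, r ≤ θ n p, q = D n p, ε + θ < 1, and 2e/D ≤ e^{-6/(1-ε-θ)}: the quantity d · e^d · (e d / q)^{(d-r)/2} is at most e^{-n p} for all sufficiently large n p. -/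
open Real

/-- For `(1-ε)np ≤ d ≤ 2np`, `r ≤ θnp`, `q = Dnp` with `ε + θ < 1` and
`2e/D ≤ e^(-6/(1-ε-θ))`, the quantity `d e^d (e d / q)^((d-r)/2)` is at most
`e^(-np)` for all sufficiently large `np`. -/
theorem probabilistic_step_bound (ε θ D : ℝ) (hε : 0 < ε) (hθ : 0 < θ)
    (hεθ : ε + θ < 1) (hD : 0 < D)
    (hDbig : 2 * Real.exp 1 / D ≤ Real.exp (-(6 / (1 - ε - θ)))) :
    ∃ N : ℝ, ∀ n p d q r : ℝ, 2 ≤ n → 0 < p →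
      (1 - ε) * n * p ≤ d → d ≤ 2 * n * p → 0 ≤ r → r ≤ θ * n * p → q = D * n * p →
      N ≤ n * p →
      d * Real.exp d * (Real.exp 1 * d / q) ^ ((d - r) / 2) ≤ Real.exp (-(n * p)) := by
  refine ⟨0, fun n p d q r hn hp hd1 hd2 hr0 hr hq hN => ?_⟩
  have h1 : 0 < 1 - ε - θ := by linarith
  have hx0 : 0 < n * p := by nlinarith
  have hd0 : 0 < d := lt_of_lt_of_le (by nlinarith) hd1
  have hq0 : 0 < q := by rw [hq]; positivity
  have hb0 : 0 < Real.exp 1 * d / q := by positivity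
  set x := n * p with hxdef
  set β := 6 / (1 - ε - θ) with hβdef
  set y := (d - r) / 2 with hydef
  have hy0 : 0 ≤ y := by
    have : r ≤ d := by nlinarith
    simp only [hydef]; linarith
  have hβx : β * (1 - ε - θ) = 6 := div_mul_cancel₀ _ (ne_of_gt h1)
  have hβ3 : 3 ≤ β / 2 := by nlinarith
  have hble : Real.exp 1 * d / q ≤ Real.exp (-β) := by
    refine le_trans ?_ hDbig
    rw [hq, div_le_div_iff₀ (by positivity) hD]
    nlinarith [mul_le_mul_of_nonneg_left hd2 (mul_pos (Real.exp_pos 1) hD).le]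
  have hpow : (Real.exp 1 * d / q) ^ y ≤ Real.exp (-β * y) := by
    calc (Real.exp 1 * d / q) ^ y ≤ (Real.exp (-β)) ^ y :=
          Real.rpow_le_rpow (le_of_lt hb0) hble hy0
      _ = Real.exp (-β * y) := (Real.exp_mul _ _).symm
  have hexp : d + -β * y ≤ -(2 * x) := by
    have h2 : (1 - ε - θ) * (β * y) = 6 * y := by
      rw [← mul_assoc, mul_comm (1 - ε - θ) β, hβx]
    have hy6 : (6:ℝ) * y = 3 * (d - r) := by rw [hydef]; ring
    have key : (1 - ε - θ) * (d + -β * y) ≤ (1 - ε - θ) * (-(2 * x)) := by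
      have hlhs : (1 - ε - θ) * (d + -β * y) = (1 - ε - θ) * d - 3 * (d - r) := by
        linear_combination -h2 - hy6
      rw [hlhs, hxdef]
      nlinarith [mul_le_mul_of_nonneg_left hd1 (by linarith : (0:ℝ) ≤ 2 + ε + θ),
        mul_pos (mul_pos hε h1) hx0, hr]
    exact le_of_mul_le_mul_left key h1
  have hdx : d ≤ Real.exp x := by
    have hsq : Real.exp (x / 2) * Real.exp (x / 2) = Real.exp x := by
      rw [← Real.exp_add]; ring_nf
    nlinarith [Real.add_one_le_exp (x / 2), Real.exp_pos (x / 2), sq_nonneg (x / 2 - 1)]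
  calc d * Real.exp d * (Real.exp 1 * d / q) ^ y
      ≤ d * Real.exp d * Real.exp (-β * y) := by
        exact mul_le_mul_of_nonneg_left hpow (by positivity)
    _ = d * Real.exp (d + -β * y) := by rw [Real.exp_add]; ring
    _ ≤ Real.exp x * Real.exp (-(2 * x)) :=
        mul_le_mul hdx (Real.exp_le_exp.2 hexp) (Real.exp_pos _).le (Real.exp_pos _).le
    _ = Real.exp (-x) := by rw [← Real.exp_add]; ring_nf
end
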